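/- Let d ≥ 2 and f : [0,4] → (-∞,∞] be finite, non-increasing, and convex on (0,4], differentiable on (0,4) with concave derivative f' on (0,4), and lim_{t→0⁺} f(t) = f(0). Then for every (d+1)-point configuration ω ⊂ S^{d-1}, min_{x ∈ S^{d-1}} ∑_{v ∈ ω} f(|x - v|²) ≤ f(4) + d·f(2 - 2/d), with equality attained by the vertex set ω* of a regular d-simplex inscribed in S^{d-1}. Hence the (d+1)-point f-polarization of S^{d-1} equals f(4) + d·f(2 - 2/d). -/

import Mathlib

open Set Finset Filter
attribute [local instance] Classical.propDecidable

local notation "⟪" x ", " y "⟫" => @inner ℝ _ _ x y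



private lemma affine_convexOn (s : Set ℝ) (hs : Convex ℝ s) (m b : ℝ) :
    ConvexOn ℝ s (fun u => m * u + b) := by
  refine ⟨hs, fun x _ y _ p q hp hq hpq => le_of_eq ?_⟩
  simp only [smul_eq_mul]
  have hq1 : q = 1 - p := by linarith
  rw [hq1]; ring

private lemma core (G G' : ℝ → ℝ) (a : ℝ) (ha : a ∈ Set.Ioo (-1:ℝ) 1)
    (hderiv : ∀ u ∈ Set.Ioo (-1:ℝ) 1, HasDerivAt G (G' u) u)
    (hG'conv : ConvexOn ℝ (Set.Ioo (-1:ℝ) 1) G')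
    (hGmin : ∀ u ∈ Set.Ico (-1:ℝ) 1, G (-1) ≤ G u)
    (c : ℝ) (hc : G (-1) = G a + G' a * (-1-a) + c * (-1-a)^2) :
    ∀ u ∈ Set.Ico (-1:ℝ) 1, G a + G' a * (u-a) + c * (u-a)^2 ≤ G u := by
  set q : ℝ → ℝ := fun u => G a + G' a * (u-a) + c * (u-a)^2 with hq
  set h : ℝ → ℝ := fun u => G u - q u with hh
  set H : ℝ → ℝ := fun u => G' u - (G' a + 2*c*(u-a)) with hH
  have hHa : H a = 0 := by simp [hH]
  have hha : h a = 0 := by simp [hh, hq]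
  have hhm1 : h (-1) = 0 := by simp only [hh, hq]; rw [hc]; ring
  have hqcont : Continuous q := by fun_prop
  -- derivative of h
  have hhd : ∀ u ∈ Set.Ioo (-1:ℝ) 1, HasDerivAt h (H u) u := by
    intro u hu
    have h1 : HasDerivAt q (G' a + 2*c*(u-a)) u := by
      have : HasDerivAt (fun u : ℝ => G a + G' a * (u-a) + c * (u-a)^2)
          (G' a + 2*c*(u-a)) u := by
        have := ((hasDerivAt_id u).sub_const a)
        have h2 := this.const_mul (G' a)
        have h3 := (this.pow 2).const_mul c
        have := (h2.const_add (G a)).add h3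
        refine this.congr_deriv ?_
        simp only [id_eq]
        push_cast; ring
      exact this
    exact ((hderiv u hu).sub h1)
  -- convexity of H
  have hHconv : ConvexOn ℝ (Set.Ioo (-1:ℝ) 1) H := by
    refine ⟨convex_Ioo _ _, fun x hx y hy p r hp hr hpr => ?_⟩
    have h2 := hG'conv.2 hx hy hp hr hpr
    simp only [smul_eq_mul] at h2 ⊢
    have hid : G' a + 2*c*(p*x+r*y-a) = p*(G' a + 2*c*(x-a)) + r*(G' a + 2*c*(y-a)) := by
      linear_combination (G' a - 2*c*a) * hpr.symm
    simp only [hH]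
    linarith [h2, hid]
  -- three point convexity tool
  have key : ∀ z m r : ℝ, z ∈ Set.Ioo (-1:ℝ) 1 → r ∈ Set.Ioo (-1:ℝ) 1 → z < m → m < r →
      H m ≤ ((r-m)/(r-z)) * H z + ((m-z)/(r-z)) * H r := by
    intro z m r hz hr hzm hmr
    have hzr : z < r := hzm.trans hmr
    have hden : (0:ℝ) < r - z := by linarith
    have h1 : ((r-m)/(r-z)) • z + ((m-z)/(r-z)) • r = m := by
      simp only [smul_eq_mul]
      field_simp
      ring
    have h2 : H (((r-m)/(r-z)) • z + ((m-z)/(r-z)) • r) ≤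
        ((r-m)/(r-z)) • H z + ((m-z)/(r-z)) • H r :=
      hHconv.2 hz hr (div_nonneg (by linarith) (by linarith))
        (div_nonneg (by linarith) (by linarith))
        (by field_simp; ring)
    rw [h1] at h2
    simpa [smul_eq_mul] using h2
  -- monotonicity tools
  have mono : ∀ w u : ℝ, -1 < w → u < 1 → w ≤ u → (∀ z ∈ Set.Ioo w u, 0 ≤ H z) →
      h w ≤ h u := by
    intro w u hw hu hwu hpos
    rcases eq_or_lt_of_le hwu with rfl | hwu
    · exact le_rfl
    have hsub : Set.Icc w u ⊆ Set.Ioo (-1:ℝ) 1 := fun z hz =>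
      ⟨lt_of_lt_of_le hw hz.1, lt_of_le_of_lt hz.2 hu⟩
    have hmono := monotoneOn_of_deriv_nonneg (convex_Icc w u)
      (fun z hz => ((hhd z (hsub hz)).continuousAt).continuousWithinAt)
      (fun z hz => by
        rw [interior_Icc] at hz
        exact ((hhd z (hsub (Set.mem_Icc_of_Ioo hz))).differentiableAt).differentiableWithinAt)
      (fun z hz => by
        rw [interior_Icc] at hz
        rw [(hhd z (hsub (Set.mem_Icc_of_Ioo hz))).deriv]
        exact hpos z hz)
    exact hmono (Set.left_mem_Icc.2 hwu.le) (Set.right_mem_Icc.2 hwu.le) hwu.le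
  have anti : ∀ w u : ℝ, -1 < w → u < 1 → w ≤ u → (∀ z ∈ Set.Ioo w u, H z ≤ 0) →
      h u ≤ h w := by
    intro w u hw hu hwu hneg
    rcases eq_or_lt_of_le hwu with rfl | hwu
    · exact le_refl _
    have hsub : Set.Icc w u ⊆ Set.Ioo (-1:ℝ) 1 := fun z hz =>
      ⟨lt_of_lt_of_le hw hz.1, lt_of_le_of_lt hz.2 hu⟩
    have hanti := antitoneOn_of_deriv_nonpos (convex_Icc w u)
      (fun z hz => ((hhd z (hsub hz)).continuousAt).continuousWithinAt)
      (fun z hz => by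
        rw [interior_Icc] at hz
        exact ((hhd z (hsub (Set.mem_Icc_of_Ioo hz))).differentiableAt).differentiableWithinAt)
      (fun z hz => by
        rw [interior_Icc] at hz
        rw [(hhd z (hsub (Set.mem_Icc_of_Ioo hz))).deriv]
        exact hneg z hz)
    exact hanti (Set.left_mem_Icc.2 hwu.le) (Set.right_mem_Icc.2 hwu.le) hwu.le
  -- anchor trick
  have anchor : ∀ u : ℝ, u ∈ Set.Ioo (-1:ℝ) 1 →
      (∀ z ∈ Set.Ioo (-1:ℝ) u, 0 ≤ H z) → 0 ≤ h u := by
    intro u hu hpos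
    have hev : ∀ᶠ w in nhdsWithin (-1:ℝ) (Set.Ioi (-1:ℝ)), G (-1) - q w ≤ h u := by
      filter_upwards [Ioo_mem_nhdsGT_of_mem (Set.left_mem_Ico.2 hu.1)] with w hw
      have hw1 : h w ≤ h u := mono w u hw.1 hu.2 hw.2.le
        (fun z hz => hpos z ⟨hw.1.trans hz.1, hz.2⟩)
      have hw2 : G (-1) - q w ≤ h w := by
        have := hGmin w ⟨hw.1.le, hw.2.trans hu.2⟩
        simp only [hh]; linarith
      linarith
    have htend : Filter.Tendsto (fun w => G (-1) - q w) (nhdsWithin (-1:ℝ) (Set.Ioi (-1:ℝ)))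
        (nhds (G (-1) - q (-1))) :=
      ((continuous_const.sub hqcont).tendsto _).mono_left nhdsWithin_le_nhds
    have := le_of_tendsto htend hev
    have hqm1 : q (-1) = G (-1) := by simp only [hq]; rw [hc]
    rw [hqm1] at this
    linarith
  -- main proof
  intro u hu
  rcases eq_or_lt_of_le hu.1 with rfl | hu1
  · exact le_of_eq (by rw [hc])
  rcases lt_trichotomy u a with hua | hua | hua
  · -- u < a
    by_cases hcase : ∀ w ∈ Set.Ioo u a, H w ≤ 0
    · have := anti u a hu1 ha.2 hua.le hcase
      rw [hha] at this
      simpa [hh] using this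
    · push_neg at hcase
      obtain ⟨w₀, hw₀, hHw₀⟩ := hcase
      have hw₀mem : w₀ ∈ Set.Ioo (-1:ℝ) 1 := ⟨hu1.trans hw₀.1, hw₀.2.trans ha.2⟩
      have hzpos : ∀ z ∈ Set.Ioo (-1:ℝ) w₀, 0 ≤ H z := by
        intro z hz
        have hk := key z w₀ a ⟨hz.1, hz.2.trans hw₀mem.2⟩ ha hz.2 hw₀.2
        rw [hHa] at hk
        have hd1 : (0:ℝ) < a - z := by
          have : z < a := hz.2.trans hw₀.2
          linarith
        have hd2 : (0:ℝ) < a - w₀ := by linarith [hw₀.2]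
        by_contra hcon
        push_neg at hcon
        have : ((a-w₀)/(a-z)) * H z < 0 := by
          apply mul_neg_of_pos_of_neg (by positivity) hcon
        simp only [mul_zero, add_zero] at hk
        exact absurd hk (not_le.2 (this.trans hHw₀))
      have := anchor u ⟨hu1, hu.2⟩ (fun z hz => hzpos z ⟨hz.1, hz.2.trans hw₀.1⟩)
      simpa [hh] using this
  · rw [hua]; simp
  · -- a < u
    have Hpos : ∀ w ∈ Set.Ioo a (1:ℝ), 0 ≤ H w := by
      by_contra hcon
      push_neg at hcon
      obtain ⟨w, hw, hHw⟩ := hcon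
      have hwmem : w ∈ Set.Ioo (-1:ℝ) 1 := ⟨ha.1.trans hw.1, hw.2⟩
      have hzpos : ∀ z ∈ Set.Ioo (-1:ℝ) a, 0 < H z := by
        intro z hz
        have hk := key z a w ⟨hz.1, hz.2.trans ha.2⟩ hwmem hz.2 hw.1
        rw [hHa] at hk
        have hd1 : (0:ℝ) < w - z := by linarith [hz.2, hw.1]
        have hl1 : (0:ℝ) < (w-a)/(w-z) := by
          have : (0:ℝ) < w - a := by linarith [hw.1]
          positivity
        have hl2 : (0:ℝ) < (a-z)/(w-z) := by
          have : (0:ℝ) < a - z := by linarith [hz.2]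
          positivity
        have hneg : (a-z)/(w-z) * H w < 0 := mul_neg_of_pos_of_neg hl2 hHw
        by_contra hcon
        push_neg at hcon
        have hzz : (w-a)/(w-z) * H z ≤ 0 := mul_nonpos_of_nonneg_of_nonpos hl1.le hcon
        linarith
      set u' := ((-1) + a)/2 with hu'
      have hu'mem : u' ∈ Set.Ioo (-1:ℝ) a := by
        constructor <;> [skip; skip] <;> simp only [hu'] <;> linarith [ha.1]
      have h1 : 0 ≤ h u' := anchor u' ⟨hu'mem.1, hu'mem.2.trans ha.2⟩
        (fun z hz => (hzpos z ⟨hz.1, hz.2.trans hu'mem.2⟩).le)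
      -- strict monotonicity on [u', a]
      have hsub : Set.Icc u' a ⊆ Set.Ioo (-1:ℝ) 1 := fun z hz =>
        ⟨lt_of_lt_of_le hu'mem.1 hz.1, lt_of_le_of_lt hz.2 ha.2⟩
      have hstrict := strictMonoOn_of_deriv_pos (convex_Icc u' a)
        (fun z hz => ((hhd z (hsub hz)).continuousAt).continuousWithinAt)
        (fun z hz => by
          rw [interior_Icc] at hz
          rw [(hhd z (hsub (Set.mem_Icc_of_Ioo hz))).deriv]
          exact hzpos z ⟨hu'mem.1.trans hz.1, hz.2⟩)
      have h2 : h u' < h a := hstrict (Set.left_mem_Icc.2 hu'mem.2.le)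
        (Set.right_mem_Icc.2 hu'mem.2.le) hu'mem.2
      rw [hha] at h2
      linarith
    have := mono a u ha.1 hu.2 hua.le (fun z hz => Hpos z ⟨hz.1, hz.2.trans hu.2⟩)
    rw [hha] at this
    simpa [hh] using this

private lemma geom (d : ℕ) (hd : 2 ≤ d) (v : Fin (d+1) → EuclideanSpace ℝ (Fin d))
    (hv : ∀ i, ‖v i‖ = 1) (hinj : Function.Injective v) :
    ∃ x : EuclideanSpace ℝ (Fin d), ‖x‖ = 1 ∧ (∀ i, ⟪x, v i⟫ ≤ 1/(d:ℝ)) ∧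
      (∑ i, ⟪x, v i⟫) ≤ 0 := by
  have hdpos : (0:ℝ) < d := by positivity
  have hdinv : (0:ℝ) ≤ 1/(d:ℝ) := by positivity
  by_cases hC : ∃ w : EuclideanSpace ℝ (Fin d), w ≠ 0 ∧ ∀ i, ⟪w, v i⟫ ≤ 0
  · obtain ⟨w, hw0, hwle⟩ := hC
    refine ⟨(‖w‖:ℝ)⁻¹ • w, ?_, fun i => ?_, ?_⟩
    · exact norm_smul_inv_norm (𝕜 := ℝ) hw0
    · rw [real_inner_smul_left]
      have : (0:ℝ) ≤ ‖w‖⁻¹ := by positivity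
      exact le_trans (mul_nonpos_of_nonneg_of_nonpos this (hwle i)) hdinv
    · apply Finset.sum_nonpos
      intro i _
      rw [real_inner_smul_left]
      have : (0:ℝ) ≤ ‖w‖⁻¹ := by positivity
      exact mul_nonpos_of_nonneg_of_nonpos this (hwle i)
  · -- no separating vector: 0 in convex hull, simplex structure
    push_neg at hC
    have hC' : ∀ w : EuclideanSpace ℝ (Fin d), w ≠ 0 → ∃ i, 0 < ⟪w, v i⟫ := hC
    -- orthogonality helper
    have hOrth : ∀ (j : Fin (d+1)) (w : EuclideanSpace ℝ (Fin d)),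
        (∀ k : Fin d, ⟪w, v (j.succAbove k)⟫ = 0) → w = 0 := by
      intro j w hw
      by_contra hw0
      set w' := if ⟪w, v j⟫ ≤ 0 then w else -w with hw'
      have hw'0 : w' ≠ 0 := by
        simp only [hw']
        split <;> simpa
      obtain ⟨i, hi⟩ := hC' w' hw'0
      rcases eq_or_ne i j with rfl | hij
      · simp only [hw'] at hi
        split at hi
        · linarith
        · rw [inner_neg_left] at hi
          push_neg at *
          linarith
      · obtain ⟨k, hk⟩ := Fin.exists_succAbove_eq hij
        have : ⟪w', v i⟫ = 0 := by
          simp only [hw']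
          split
          · rw [← hk]; exact hw k
          · rw [inner_neg_left, ← hk, hw k, neg_zero]
        linarith [this ▸ hi]
    -- 0 is in the convex hull of the v i
    have h0 : (0 : EuclideanSpace ℝ (Fin d)) ∈ convexHull ℝ (Set.range v) := by
      by_contra h0
      obtain ⟨F, u, hFlt, hFu⟩ := geometric_hahn_banach_closed_point
        (convex_convexHull ℝ _) (((Set.finite_range v).isCompact_convexHull ℝ).isClosed) h0
      rw [map_zero] at hFu
      set w := (InnerProductSpace.toDual ℝ (EuclideanSpace ℝ (Fin d))).symm F with hwdef
      have hweq : ∀ y, ⟪w, y⟫ = F y := fun y => InnerProductSpace.toDual_symm_apply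
      have hw0 : w ≠ 0 := by
        intro h
        have := hFlt (v 0) (subset_convexHull ℝ _ (Set.mem_range_self 0))
        rw [← hweq (v 0), h, inner_zero_left] at this
        linarith
      obtain ⟨i, hi⟩ := hC' w hw0
      have := hFlt (v i) (subset_convexHull ℝ _ (Set.mem_range_self i))
      rw [← hweq (v i)] at this
      linarith
    -- extract weights
    rw [← Set.image_univ, ← Finset.coe_univ, ← Finset.coe_image, Finset.convexHull_eq] at h0
    obtain ⟨W, hW0, hW1, hWc⟩ := h0
    rw [Finset.centerMass_eq_of_sum_1 _ _ hW1] at hWc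
    set μ : Fin (d+1) → ℝ := fun i => W (v i) with hμdef
    have hμ0 : ∀ i, 0 ≤ μ i := fun i => hW0 _ (Finset.mem_image_of_mem v (mem_univ i))
    have hinj' : ∀ x ∈ (univ : Finset (Fin (d+1))), ∀ y ∈ (univ : Finset (Fin (d+1))),
        v x = v y → x = y := fun x _ y _ h => hinj h
    have hμ1 : ∑ i, μ i = 1 := by
      rw [Finset.sum_image hinj'] at hW1
      exact hW1
    have hμc : ∑ i, μ i • v i = 0 := by
      rw [Finset.sum_image hinj'] at hWc
      simpa using hWc
    -- pick index with minimal weight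
    obtain ⟨j, _, hjmin⟩ := Finset.exists_min_image (univ : Finset (Fin (d+1))) μ ⟨0, mem_univ 0⟩
    have hμj_le : (d+1:ℝ) * μ j ≤ 1 := by
      calc (d+1:ℝ) * μ j = ∑ _i : Fin (d+1), μ j := by
            simp [Finset.sum_const, Finset.card_univ, mul_comm]
        _ ≤ ∑ i, μ i := Finset.sum_le_sum (fun i _ => hjmin i (mem_univ i))
        _ = 1 := hμ1
    -- span of the other vectors is everything
    set fam : Fin d → EuclideanSpace ℝ (Fin d) := fun k => v (j.succAbove k) with hfam
    have hKtop : Submodule.span ℝ (Set.range fam) = ⊤ := by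
      rw [← Submodule.orthogonal_eq_bot_iff]
      rw [Submodule.eq_bot_iff]
      intro w hw
      refine hOrth j w (fun k => ?_)
      have := hw (fam k) (Submodule.subset_span (Set.mem_range_self k))
      rw [real_inner_comm] at this
      exact this
    have hIndep : LinearIndependent ℝ fam := by
      rw [linearIndependent_iff_card_eq_finrank_span]
      rw [Set.finrank, hKtop]
      simp [finrank_top, finrank_euclideanSpace_fin]
    -- μ j is positive
    have hμjpos : 0 < μ j := by
      rcases (hμ0 j).lt_or_eq with h | h
      · exact h
      have hsum := (Fin.sum_univ_succAbove (fun i => μ i • v i) j).symm.trans hμc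
      rw [← h, zero_smul, zero_add] at hsum
      have hall := Fintype.linearIndependent_iff.mp hIndep (fun k => μ (j.succAbove k)) hsum
      have : ∑ i, μ i = μ j + ∑ k, μ (j.succAbove k) := Fin.sum_univ_succAbove μ j
      rw [hμ1, ← h] at this
      simp only [hall, Finset.sum_const_zero, add_zero] at this
      norm_num at this
    -- construct the dual vector n
    have hsurj : Function.Surjective
        (LinearMap.pi (fun k : Fin d => ((innerSL ℝ (fam k)).toLinearMap)) :
          EuclideanSpace ℝ (Fin d) →ₗ[ℝ] (Fin d → ℝ)) := by
      rw [← LinearMap.injective_iff_surjective_of_finrank_eq_finrank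
        (by simp [finrank_euclideanSpace_fin, Module.finrank_pi])]
      intro w₁ w₂ hww
      have hzero : ∀ k, ⟪w₁ - w₂, v (j.succAbove k)⟫ = 0 := by
        intro k
        have h1 := congrFun hww k
        simp only [LinearMap.pi_apply, ContinuousLinearMap.coe_coe, innerSL_apply_apply] at h1
        have : ⟪w₁ - w₂, fam k⟫ = 0 := by
          rw [inner_sub_left, real_inner_comm (fam k) w₁, real_inner_comm (fam k) w₂, h1,
            sub_self]
        simpa [hfam] using this
      exact sub_eq_zero.mp (hOrth j (w₁ - w₂) hzero)
    obtain ⟨n, hn⟩ := hsurj (fun _ => 1/(d:ℝ))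
    have hnk : ∀ k : Fin d, ⟪fam k, n⟫ = 1/(d:ℝ) := by
      intro k
      have := congrFun hn k
      simpa [LinearMap.pi_apply, innerSL_apply_apply] using this
    have hvn : ∀ i, i ≠ j → ⟪n, v i⟫ = 1/(d:ℝ) := by
      intro i hij
      obtain ⟨k, hk⟩ := Fin.exists_succAbove_eq hij
      rw [real_inner_comm, ← hk]
      exact hnk k
    -- the key inner product value
    have hrest : ∑ k : Fin d, μ (j.succAbove k) = 1 - μ j := by
      have := Fin.sum_univ_succAbove μ j
      rw [hμ1] at this
      linarith
    have hsum0 : μ j * ⟪v j, n⟫ + (1 - μ j) * (1/(d:ℝ)) = 0 := by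
      have h0n : ⟪(0 : EuclideanSpace ℝ (Fin d)), n⟫ = (0:ℝ) := inner_zero_left n
      rw [← hμc, sum_inner] at h0n
      simp only [real_inner_smul_left] at h0n
      rw [Fin.sum_univ_succAbove (fun i => μ i * ⟪v i, n⟫) j] at h0n
      have hrw : ∀ k : Fin d, μ (j.succAbove k) * ⟪v (j.succAbove k), n⟫
          = μ (j.succAbove k) * (1/(d:ℝ)) := by
        intro k
        rw [show ⟪v (j.succAbove k), n⟫ = (1/(d:ℝ)) from hnk k]
      rw [Finset.sum_congr rfl (fun k _ => hrw k), ← Finset.sum_mul, hrest] at h0n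
      exact h0n
    have hdμ : (0:ℝ) < (d:ℝ) * μ j := by positivity
    have hd0 : (d:ℝ) ≠ 0 := ne_of_gt hdpos
    have hj1 : ⟪v j, n⟫ ≤ -1 := by
      have h2 := congrArg (fun z : ℝ => z * (d:ℝ)) hsum0
      simp only [add_mul, zero_mul] at h2
      rw [mul_assoc (1 - μ j), one_div_mul_cancel hd0, mul_one] at h2
      nlinarith [hμj_le, hdμ, h2]
    -- norm of n is at least 1
    have hnnorm : 1 ≤ ‖n‖ := by
      have h1 := abs_real_inner_le_norm (v j) n
      rw [hv j, one_mul] at h1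
      have h2 : 1 ≤ |⟪v j, n⟫| := by
        rw [abs_of_nonpos (by linarith)]
        linarith
      linarith
    have hn0 : n ≠ 0 := by
      intro h
      rw [h, norm_zero] at hnnorm
      linarith
    have hinv0 : (0:ℝ) ≤ ‖n‖⁻¹ := by positivity
    have hinvle : ‖n‖⁻¹ ≤ 1 := by
      rw [inv_le_one_iff₀]
      right; exact hnnorm
    refine ⟨(‖n‖:ℝ)⁻¹ • n, norm_smul_inv_norm (𝕜 := ℝ) hn0, fun i => ?_, ?_⟩
    · rw [real_inner_smul_left]
      rcases eq_or_ne i j with rfl | hij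
      · have : ⟪n, v i⟫ ≤ -1 := by rw [real_inner_comm]; exact hj1
        exact le_trans (mul_nonpos_of_nonneg_of_nonpos hinv0 (by linarith)) hdinv
      · rw [hvn i hij]
        exact mul_le_of_le_one_left hdinv hinvle
    · have hsplit : ∑ i, ⟪n, v i⟫ = ⟪n, v j⟫ + ∑ k : Fin d, ⟪n, v (j.succAbove k)⟫ :=
        Fin.sum_univ_succAbove (fun i => ⟪n, v i⟫) j
      have hrest2 : ∑ k : Fin d, ⟪n, v (j.succAbove k)⟫ = 1 := by
        rw [Finset.sum_congr rfl (fun k (_ : k ∈ (Finset.univ : Finset (Fin d))) => hvn (j.succAbove k)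
          (Fin.succAbove_ne j k))]
        simp
        field_simp
      have hsum2 : ∑ i, ⟪n, v i⟫ ≤ 0 := by
        rw [hsplit, hrest2, real_inner_comm]
        linarith
      calc ∑ i, ⟪(‖n‖:ℝ)⁻¹ • n, v i⟫ = ‖n‖⁻¹ * ∑ i, ⟪n, v i⟫ := by
            rw [Finset.mul_sum]
            exact Finset.sum_congr rfl (fun i _ => real_inner_smul_left n (v i) _)
        _ ≤ 0 := mul_nonpos_of_nonneg_of_nonpos hinv0 hsum2

private lemma simplex_facts (d : ℕ) (hd : 2 ≤ d)
    (x : Fin (d+1) → EuclideanSpace ℝ (Fin d))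
    (hx1 : ∀ i, ‖x i‖ = 1)
    (hxin : ∀ i j, i ≠ j → ⟪x i, x j⟫ = -1/(d:ℝ)) :
    (∀ y : EuclideanSpace ℝ (Fin d), ∑ i, ⟪y, x i⟫ = 0) ∧
    (∀ y : EuclideanSpace ℝ (Fin d), ‖y‖ = 1 → ∑ i, ⟪y, x i⟫^2 = 1 + 1/(d:ℝ)) := by
  have hdpos : (0:ℝ) < d := by positivity
  have hd0 : (d:ℝ) ≠ 0 := ne_of_gt hdpos
  have hself : ∀ i, ⟪x i, x i⟫ = (1:ℝ) := by
    intro i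
    rw [real_inner_self_eq_norm_sq, hx1 i, one_pow]
  -- the sum of the x i is 0
  have hrow : ∀ i, ∑ j, ⟪x i, x j⟫ = 0 := by
    intro i
    rw [Fin.sum_univ_succAbove (fun j => ⟪x i, x j⟫) i, hself i]
    rw [Finset.sum_congr rfl (fun k (_ : k ∈ (Finset.univ : Finset (Fin d))) =>
      hxin i (i.succAbove k) (Fin.succAbove_ne i k).symm)]
    simp only [Finset.sum_const, Finset.card_univ, Fintype.card_fin, nsmul_eq_mul]
    field_simp
    ring
  have hs0 : ∑ i, x i = 0 := by
    have h1 : ⟪∑ i, x i, ∑ j, x j⟫ = (0:ℝ) := by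
      rw [sum_inner]
      have hz : ∀ i ∈ (Finset.univ : Finset (Fin (d+1))), ⟪x i, ∑ j, x j⟫ = (0:ℝ) := by
        intro i _
        rw [inner_sum]
        exact hrow i
      rw [Finset.sum_congr rfl hz]
      simp
    exact inner_self_eq_zero.mp h1
  have hsum_inner : ∀ y : EuclideanSpace ℝ (Fin d), ∑ i, ⟪y, x i⟫ = 0 := by
    intro y
    rw [← inner_sum, hs0, inner_zero_right]
  refine ⟨hsum_inner, ?_⟩
  -- linear independence of x ∘ succ
  have hIndep : LinearIndependent ℝ (fun k : Fin d => x k.succ) := by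
    rw [Fintype.linearIndependent_iff]
    intro g hg
    have hgm : ∀ m : Fin d, g m * ((d:ℝ)+1) = ∑ k, g k := by
      intro m
      have h0 : ⟪x m.succ, ∑ k, g k • x k.succ⟫ = (0:ℝ) := by
        rw [hg, inner_zero_right]
      rw [inner_sum] at h0
      simp only [real_inner_smul_right] at h0
      have hsplit : ∀ k : Fin d, g k * ⟪x m.succ, x k.succ⟫
          = g k * (-1/(d:ℝ)) + (if k = m then g k * (1 + 1/(d:ℝ)) else 0) := by
        intro k
        by_cases hk : k = m
        · subst hk
          rw [hself]
          simp only [if_pos rfl, if_true]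
          field_simp
          ring
        · rw [hxin _ _ (fun h => hk (Fin.succ_inj.mp h).symm), if_neg hk, add_zero]
      rw [Finset.sum_congr rfl (fun k (_ : k ∈ (Finset.univ : Finset (Fin d))) => hsplit k),
        Finset.sum_add_distrib, Finset.sum_ite_eq' Finset.univ m] at h0
      simp only [Finset.mem_univ, if_pos] at h0
      rw [← Finset.sum_mul] at h0
      have h2 := congrArg (fun z : ℝ => z * (d:ℝ)) h0
      simp only [add_mul, zero_mul] at h2
      have e1 : (∑ k, g k) * (-1/(d:ℝ)) * (d:ℝ) = -(∑ k, g k) := by field_simp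
      have e2 : g m * (1+1/(d:ℝ)) * (d:ℝ) = g m * ((d:ℝ)+1) := by
        field_simp
      rw [e1, e2] at h2
      linarith
    have hS : ∑ k, g k = 0 := by
      have h3 : (∑ k, g k) * ((d:ℝ)+1) = (d:ℝ) * (∑ k, g k) := by
        calc (∑ k, g k) * ((d:ℝ)+1) = ∑ m, g m * ((d:ℝ)+1) := Finset.sum_mul Finset.univ g ((d:ℝ)+1)
          _ = ∑ _m : Fin d, ∑ k, g k :=
              Finset.sum_congr rfl (fun m _ => hgm m)
          _ = (d:ℝ) * ∑ k, g k := by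
              simp [Finset.sum_const, Finset.card_univ, nsmul_eq_mul]
      linear_combination h3
    intro m
    have h4 := hgm m
    rw [hS] at h4
    have hd1 : ((d:ℝ)+1) ≠ 0 := by positivity
    exact (mul_eq_zero.mp h4).resolve_right hd1
  -- basis
  have hcard : Fintype.card (Fin d) = Module.finrank ℝ (EuclideanSpace ℝ (Fin d)) := by
    simp [finrank_euclideanSpace_fin]
  haveI : Nonempty (Fin d) := ⟨⟨0, by omega⟩⟩
  set b := basisOfLinearIndependentOfCardEqFinrank hIndep hcard with hbdef
  -- the frame operator
  set T : EuclideanSpace ℝ (Fin d) →ₗ[ℝ] EuclideanSpace ℝ (Fin d) :=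
    ∑ i : Fin (d+1), ((innerSL ℝ (x i)).toLinearMap).smulRight (x i) with hTdef
  have hTapp : ∀ y, T y = ∑ i, ⟪x i, y⟫ • x i := by
    intro y
    rw [hTdef]
    simp [LinearMap.sum_apply, LinearMap.smulRight_apply, innerSL_apply_apply]
  have hTj : ∀ j, T (x j) = (1 + 1/(d:ℝ)) • x j := by
    intro j
    rw [hTapp]
    have hsplit : ∀ i : Fin (d+1), ⟪x i, x j⟫ • x i
        = (-1/(d:ℝ)) • x i + (if i = j then ((1 + 1/(d:ℝ)) • x i) else 0) := by
      intro i
      by_cases hij : i = j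
      · subst hij
        have hone : (-1/(d:ℝ)) + (1 + 1/(d:ℝ)) = 1 := by field_simp; ring
        rw [hself, if_pos rfl, ← add_smul, hone, one_smul]
      · rw [hxin _ _ hij, if_neg hij, add_zero]
    rw [Finset.sum_congr rfl (fun i (_ : i ∈ (Finset.univ : Finset (Fin (d+1)))) => hsplit i),
      Finset.sum_add_distrib, Finset.sum_ite_eq' Finset.univ j]
    simp only [Finset.mem_univ, if_pos]
    rw [← Finset.smul_sum, hs0, smul_zero, zero_add]
  have hT : T = (1 + 1/(d:ℝ)) • (LinearMap.id : EuclideanSpace ℝ (Fin d) →ₗ[ℝ] _) := by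
    apply Module.Basis.ext b
    intro k
    have hbk : b k = x k.succ := by
      rw [hbdef, coe_basisOfLinearIndependentOfCardEqFinrank]
    rw [hbk, hTj]
    simp
  intro y hy
  have h5 : ⟪y, T y⟫ = ∑ i, ⟪y, x i⟫^2 := by
    rw [hTapp, inner_sum]
    refine Finset.sum_congr rfl (fun i _ => ?_)
    rw [real_inner_smul_right, real_inner_comm (x i) y]
    ring
  have h6 : ⟪y, T y⟫ = 1 + 1/(d:ℝ) := by
    rw [hT]
    simp only [LinearMap.smul_apply, LinearMap.id_apply, real_inner_smul_right]
    rw [real_inner_self_eq_norm_sq, hy]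
    norm_num
  rw [← h5, h6]

private lemma ereal_coe_sum {ι : Type*} (s : Finset ι) (g : ι → ℝ) :
    ((∑ i ∈ s, g i : ℝ) : EReal) = ∑ i ∈ s, ((g i : ℝ) : EReal) := by
  classical
  induction s using Finset.induction_on with
  | empty => simp
  | insert _ _ hnot ih =>
    rw [Finset.sum_insert hnot, Finset.sum_insert hnot, EReal.coe_add, ih]

private lemma dist_sq {E : Type*} [NormedAddCommGroup E] [InnerProductSpace ℝ E]
    (y v : E) (hy : ‖y‖ = 1) (hv : ‖v‖ = 1) : ‖y - v‖^2 = 2 - 2*⟪y, v⟫ := by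
  rw [norm_sub_sq_real, hy, hv]
  ring

-- Part 1 : upper bound for arbitrary configurations
private lemma part1 (d : ℕ) (hd : 2 ≤ d) (f : ℝ → EReal)
    (hne_bot : ∀ t ∈ Set.Icc (0:ℝ) 4, f t ≠ ⊥)
    (hfin : ∀ t ∈ Set.Ioc (0:ℝ) 4, f t ≠ ⊤)
    (hanti : AntitoneOn f (Set.Ioc (0:ℝ) 4))
    (hconv : ConvexOn ℝ (Set.Ioc (0:ℝ) 4) (fun t => (f t).toReal))
    (v : Fin (d+1) → EuclideanSpace ℝ (Fin d)) (hv : ∀ i, ‖v i‖ = 1)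
    (xx : EuclideanSpace ℝ (Fin d)) (hxx1 : ‖xx‖ = 1)
    (hxxle : ∀ i, ⟪xx, v i⟫ ≤ 1/(d:ℝ)) (hxxsum : (∑ i, ⟪xx, v i⟫) ≤ 0) :
    (∑ i, f (‖xx - v i‖^2)) ≤ f 4 + ((d:ℝ) : EReal) * f (2 - 2/(d:ℝ)) := by
  have hdpos : (0:ℝ) < d := by
    have : (2:ℝ) ≤ d := by exact_mod_cast hd
    linarith
  have hd2 : (2:ℝ)/d ≤ 1 := by
    rw [div_le_one hdpos]
    exact_mod_cast hd
  set p₀ : ℝ := 2 - 2/(d:ℝ) with hp₀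
  have hp₀pos : (0:ℝ) < p₀ := by simp only [hp₀]; linarith
  have hp₀4 : p₀ < 4 := by
    simp only [hp₀]
    have : (0:ℝ) < 2/d := by positivity
    linarith
  have hp₀mem : p₀ ∈ Set.Ioc (0:ℝ) 4 := ⟨hp₀pos, by linarith⟩
  have h4mem : (4:ℝ) ∈ Set.Ioc (0:ℝ) 4 := ⟨by norm_num, le_refl _⟩
  set A := (f 4).toReal with hAdef
  set B := (f p₀).toReal with hBdef
  have hA : f 4 = (A : EReal) :=
    (EReal.coe_toReal (hfin 4 h4mem) (hne_bot 4 ⟨by norm_num, le_refl _⟩)).symm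
  have hB : f p₀ = (B : EReal) :=
    (EReal.coe_toReal (hfin p₀ hp₀mem) (hne_bot p₀ ⟨hp₀pos.le, by linarith⟩)).symm
  -- the distances
  set t : Fin (d+1) → ℝ := fun i => ‖xx - v i‖^2 with htdef
  have ht : ∀ i, t i = 2 - 2*⟪xx, v i⟫ := fun i => dist_sq xx (v i) hxx1 (hv i)
  have htmem : ∀ i, t i ∈ Set.Icc p₀ 4 := by
    intro i
    have h1 := hxxle i
    have h2 : |⟪xx, v i⟫| ≤ 1 := by
      have := abs_real_inner_le_norm xx (v i)
      rw [hxx1, hv i] at this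
      linarith
    rw [abs_le] at h2
    rw [ht i]
    have hsc : 2/(d:ℝ) = 2*(1/(d:ℝ)) := by ring
    constructor
    · simp only [hp₀]; linarith [hsc]
    · linarith [h2.1]
  have htIoc : ∀ i, t i ∈ Set.Ioc (0:ℝ) 4 :=
    fun i => ⟨lt_of_lt_of_le hp₀pos (htmem i).1, (htmem i).2⟩
  -- chord bound
  set M := (A - B)/(4 - p₀) with hMdef
  have hMle : M ≤ 0 := by
    have hAB : A ≤ B := by
      refine EReal.toReal_le_toReal (hanti hp₀mem h4mem (by linarith))
        (hne_bot 4 ⟨by norm_num, le_refl _⟩) (hfin p₀ hp₀mem)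
    apply div_nonpos_of_nonpos_of_nonneg <;> linarith
  have hchord : ∀ s ∈ Set.Icc p₀ 4, (f s).toReal ≤ B + M * (s - p₀) := by
    intro s hs
    set lam := (4 - s)/(4 - p₀) with hlam
    have hden : (0:ℝ) < 4 - p₀ := by linarith
    have hlam0 : 0 ≤ lam := by
      apply div_nonneg <;> linarith [hs.2]
    have hlam1 : 0 ≤ 1 - lam := by
      have : lam ≤ 1 := by
        rw [hlam, div_le_one hden]
        linarith [hs.1]
      linarith
    have hcomb : lam • p₀ + (1 - lam) • (4:ℝ) = s := by
      simp only [smul_eq_mul, hlam]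
      field_simp
      ring
    have h2 := hconv.2 hp₀mem h4mem hlam0 hlam1 (by ring)
    rw [hcomb] at h2
    simp only [smul_eq_mul] at h2
    have h3 : lam * B + (1 - lam) * A = B + M * (s - p₀) := by
      simp only [hlam, hMdef]
      field_simp
      ring
    calc (f s).toReal ≤ lam * (f p₀).toReal + (1 - lam) * (f 4).toReal := h2
      _ = lam * B + (1 - lam) * A := by rw [← hAdef, ← hBdef]
      _ = B + M * (s - p₀) := h3
  -- sum of distances is at least 2(d+1)
  have hsumt : (d+1:ℝ)*p₀ + (4 - p₀) ≤ ∑ i, t i := by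
    have h1 : ∑ i, t i = 2*((d:ℝ)+1) - 2*(∑ i, ⟪xx, v i⟫) := by
      rw [Finset.sum_congr rfl (fun i (_ : i ∈ (Finset.univ : Finset (Fin (d+1)))) => ht i)]
      rw [Finset.sum_sub_distrib, ← Finset.mul_sum]
      simp [Finset.sum_const, Finset.card_univ, mul_comm]
    rw [h1]
    have h2 : (d+1:ℝ)*p₀ + (4 - p₀) = 2*((d:ℝ)+1) := by
      simp only [hp₀]
      field_simp
      ring
    rw [h2]
    linarith [hxxsum]
  -- put it together in ℝ
  have hreal : ∑ i, (f (t i)).toReal ≤ A + (d:ℝ) * B := by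
    have h1 : ∑ i, (f (t i)).toReal ≤ ∑ i, (B + M * (t i - p₀)) :=
      Finset.sum_le_sum (fun i _ => hchord (t i) (htmem i))
    have h2 : ∑ i, (B + M * (t i - p₀)) = ((d:ℝ)+1)*B + M * ((∑ i, t i) - ((d:ℝ)+1)*p₀) := by
      rw [Finset.sum_add_distrib]
      simp only [Finset.sum_const, Finset.card_univ, Fintype.card_fin, nsmul_eq_mul]
      rw [← Finset.mul_sum, Finset.sum_sub_distrib]
      simp only [Finset.sum_const, Finset.card_univ, Fintype.card_fin, nsmul_eq_mul]
      push_cast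
      ring
    have h3 : M * ((∑ i, t i) - ((d:ℝ)+1)*p₀) ≤ M * (4 - p₀) := by
      apply mul_le_mul_of_nonpos_left _ hMle
      linarith [hsumt]
    have hden0 : (4 - p₀) ≠ 0 := by linarith
    have h4 : M * (4 - p₀) = A - B := by
      rw [hMdef]
      exact div_mul_cancel₀ _ hden0
    linarith [h1, h2.le, h3, h4]
  -- back to EReal
  have hcoe : ∑ i, f (t i) = ((∑ i, (f (t i)).toReal : ℝ) : EReal) := by
    rw [ereal_coe_sum]
    refine Finset.sum_congr rfl (fun i _ => ?_)
    exact (EReal.coe_toReal (hfin _ (htIoc i)) (hne_bot _ ⟨(htIoc i).1.le, (htIoc i).2⟩)).symm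
  calc ∑ i, f (‖xx - v i‖^2) = ((∑ i, (f (t i)).toReal : ℝ) : EReal) := hcoe
    _ ≤ ((A + (d:ℝ)*B : ℝ) : EReal) := by exact_mod_cast hreal
    _ = f 4 + ((d:ℝ) : EReal) * f (2 - 2/(d:ℝ)) := by
        rw [hA, hB, ← EReal.coe_mul, ← EReal.coe_add]


private lemma part2_lb (d : ℕ) (hd : 2 ≤ d) (f : ℝ → EReal) (f' : ℝ → ℝ)
    (hne_bot : ∀ t ∈ Set.Icc (0:ℝ) 4, f t ≠ ⊥)
    (hfin : ∀ t ∈ Set.Ioc (0:ℝ) 4, f t ≠ ⊤)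
    (hanti : AntitoneOn f (Set.Ioc (0:ℝ) 4))
    (hderiv : ∀ t ∈ Set.Ioo (0:ℝ) 4, HasDerivAt (fun s => (f s).toReal) (f' t) t)
    (hconc : ConcaveOn ℝ (Set.Ioo (0:ℝ) 4) f')
    (hlim : Filter.Tendsto f (nhdsWithin 0 (Set.Ioi 0)) (nhds (f 0)))
    (x : Fin (d+1) → EuclideanSpace ℝ (Fin d)) (hx1 : ∀ i, ‖x i‖ = 1)
    (hxin : ∀ i j, i ≠ j → ⟪x i, x j⟫ = -1/(d:ℝ))
    (y : EuclideanSpace ℝ (Fin d)) (hy : ‖y‖ = 1) :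
    f 4 + ((d:ℝ) : EReal) * f (2 - 2/(d:ℝ)) ≤ ∑ i, f (‖y - x i‖^2) := by
  have hdpos : (0:ℝ) < d := by
    have : (2:ℝ) ≤ d := by exact_mod_cast hd
    linarith
  have hd0 : (d:ℝ) ≠ 0 := ne_of_gt hdpos
  have hdinv : (1:ℝ)/d ≤ 1/2 := by
    rw [div_le_div_iff₀ hdpos (by norm_num)]
    have : (2:ℝ) ≤ d := by exact_mod_cast hd
    linarith
  set a : ℝ := 1/(d:ℝ) with hadef
  have hapos : 0 < a := by positivity
  have ha : a ∈ Set.Ioo (-1:ℝ) 1 := ⟨by linarith, by linarith⟩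
  -- the transfer between u and t coordinates
  have hmap : ∀ u ∈ Set.Ico (-1:ℝ) 1, (2 - 2*u) ∈ Set.Ioc (0:ℝ) 4 := by
    intro u hu
    constructor <;> [linarith [hu.2]; linarith [hu.1]]
  have hmapo : ∀ u ∈ Set.Ioo (-1:ℝ) 1, (2 - 2*u) ∈ Set.Ioo (0:ℝ) 4 := by
    intro u hu
    constructor <;> [linarith [hu.2]; linarith [hu.1]]
  set G : ℝ → ℝ := fun u => (f (2 - 2*u)).toReal with hGdef
  set G' : ℝ → ℝ := fun u => 2 * -(f' (2 - 2*u)) with hG'def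
  -- derivative
  have hGderiv : ∀ u ∈ Set.Ioo (-1:ℝ) 1, HasDerivAt G (G' u) u := by
    intro u hu
    have haff : HasDerivAt (fun w : ℝ => 2 - 2*w) (-2) u := by
      simpa using ((hasDerivAt_id u).const_mul (2:ℝ)).const_sub (2:ℝ)
    have hcomp := (hderiv (2 - 2*u) (hmapo u hu)).comp u haff
    have : G' u = f' (2 - 2*u) * (-2) := by rw [hG'def]; ring
    rw [this]
    exact hcomp
  -- convexity of G'
  have hG'conv : ConvexOn ℝ (Set.Ioo (-1:ℝ) 1) G' := by
    have hAmap : (fun u : ℝ => f' (2 - 2*u)) = f' ∘ (AffineMap.lineMap (2:ℝ) (0:ℝ)) := by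
      funext u
      exact congrArg f' (by simp [AffineMap.lineMap_apply]; ring)
    have hpre : ConcaveOn ℝ ((AffineMap.lineMap (2:ℝ) (0:ℝ)) ⁻¹' (Set.Ioo (0:ℝ) 4))
        (f' ∘ (AffineMap.lineMap (2:ℝ) (0:ℝ))) := hconc.comp_affineMap _
    have hsub : Set.Ioo (-1:ℝ) 1 ⊆ (AffineMap.lineMap (2:ℝ) (0:ℝ)) ⁻¹' (Set.Ioo (0:ℝ) 4) := by
      intro u hu
      have : (AffineMap.lineMap (2:ℝ) (0:ℝ)) u = 2 - 2*u := by
        simp [AffineMap.lineMap_apply]; ring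
      simp only [Set.mem_preimage, this]
      exact hmapo u hu
    have hcc : ConcaveOn ℝ (Set.Ioo (-1:ℝ) 1) (fun u : ℝ => f' (2 - 2*u)) := by
      rw [hAmap]
      exact hpre.subset hsub (convex_Ioo _ _)
    have h2 := (hcc.neg).smul (by norm_num : (0:ℝ) ≤ 2)
    have hfeq : G' = fun u : ℝ => (2:ℝ) • ((-(fun w : ℝ => f' (2 - 2*w))) u) := by
      funext u
      simp [hG'def, Pi.neg_apply, smul_eq_mul]
    rw [hfeq]
    exact h2
  -- G is minimal at -1
  have hGmin : ∀ u ∈ Set.Ico (-1:ℝ) 1, G (-1) ≤ G u := by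
    intro u hu
    have h1 : (2 - 2*u) ∈ Set.Ioc (0:ℝ) 4 := hmap u hu
    have h2 : (2 - 2*(-1:ℝ)) ∈ Set.Ioc (0:ℝ) 4 := by norm_num
    have h3 : f (2 - 2*(-1:ℝ)) ≤ f (2 - 2*u) := hanti h1 h2 (by linarith [hu.1])
    exact EReal.toReal_le_toReal h3
      (hne_bot _ ⟨by norm_num, by norm_num⟩)
      (hfin _ h1)
  set c : ℝ := (G (-1) - G a + G' a * (1+a))/(1+a)^2 with hcdef
  have hc : G (-1) = G a + G' a * (-1-a) + c * (-1-a)^2 := by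
    rw [hcdef]
    have h1a : (1+a) ≠ 0 := by positivity
    field_simp
    ring
  have hcore := core G G' a ha hGderiv hG'conv hGmin c hc
  -- pointwise EReal bound on the closed interval
  have hq_ereal : ∀ u ∈ Set.Icc (-1:ℝ) 1,
      ((G a + G' a * (u-a) + c * (u-a)^2 : ℝ) : EReal) ≤ f (2 - 2*u) := by
    intro u hu
    rcases lt_or_eq_of_le hu.2 with hlt | heq
    · have hmem : u ∈ Set.Ico (-1:ℝ) 1 := ⟨hu.1, hlt⟩
      have h1 := hcore u hmem
      have h2 : f (2 - 2*u) = ((G u : ℝ) : EReal) :=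
        (EReal.coe_toReal (hfin _ (hmap u hmem)) (hne_bot _
          ⟨(hmap u hmem).1.le, (hmap u hmem).2⟩)).symm
      rw [h2]
      exact_mod_cast h1
    · subst heq
      rw [show (2 - 2*(1:ℝ)) = 0 by norm_num]
      by_cases htop : f 0 = ⊤
      · rw [htop]; exact le_top
      have hbot := hne_bot 0 ⟨le_refl _, by norm_num⟩
      have hL : f 0 = (((f 0).toReal : ℝ) : EReal) := (EReal.coe_toReal htop hbot).symm
      have hev : ∀ᶠ s in nhdsWithin (0:ℝ) (Set.Ioi 0),
          ((G a + G' a * ((1 - s/2)-a) + c * ((1 - s/2)-a)^2 : ℝ) : EReal) ≤ f s := by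
        filter_upwards [Ioo_mem_nhdsGT_of_mem (Set.left_mem_Ico.2 (by norm_num :
          (0:ℝ) < 1))] with s hs
        have hu' : (1 - s/2) ∈ Set.Ico (-1:ℝ) 1 := by
          constructor <;> [linarith [hs.2]; linarith [hs.1]]
        have h1 := hcore _ hu'
        have hGu : G (1 - s/2) = (f s).toReal := by
          simp only [hGdef]
          rw [show 2 - 2*(1 - s/2) = s by ring]
        have hfs : f s = ((G (1 - s/2) : ℝ) : EReal) := by
          rw [hGu]
          exact (EReal.coe_toReal (hfin s ⟨hs.1, by linarith [hs.2]⟩)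
            (hne_bot s ⟨hs.1.le, by linarith [hs.2]⟩)).symm
        rw [hfs]
        exact_mod_cast h1
      have hpoly : Continuous
          (fun s : ℝ => (G a + G' a * ((1 - s/2)-a) + c * ((1 - s/2)-a)^2 : ℝ)) := by
        fun_prop
      have hcont : Filter.Tendsto
          (fun s : ℝ => ((G a + G' a * ((1 - s/2)-a) + c * ((1 - s/2)-a)^2 : ℝ) : EReal))
          (nhdsWithin (0:ℝ) (Set.Ioi 0))
          (nhds (((G a + G' a * ((1:ℝ)-a) + c * ((1:ℝ)-a)^2 : ℝ) : EReal))) := by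
        have h2 := ((continuous_coe_real_ereal.comp hpoly).tendsto (0:ℝ)).mono_left
          (nhdsWithin_le_nhds (s := Set.Ioi (0:ℝ)))
        convert h2 using 2
        simp only [Function.comp_apply]
        norm_num
      exact le_of_tendsto_of_tendsto hcont hlim hev
  -- assemble
  obtain ⟨hzero, hframe⟩ := simplex_facts d hd x hx1 hxin
  have hu : ∀ i, ⟪y, x i⟫ ∈ Set.Icc (-1:ℝ) 1 := by
    intro i
    have h2 := abs_real_inner_le_norm y (x i)
    rw [hy, hx1 i] at h2
    rw [Set.mem_Icc, ← abs_le]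
    linarith
  have hdist : ∀ i, ‖y - x i‖^2 = 2 - 2*⟪y, x i⟫ := fun i => dist_sq _ _ hy (hx1 i)
  have hsumq : ∑ i, (G a + G' a * (⟪y, x i⟫-a) + c * (⟪y, x i⟫-a)^2)
      = G (-1) + (d:ℝ) * G a := by
    have hexp : ∀ i : Fin (d+1), G a + G' a * (⟪y, x i⟫-a) + c * (⟪y, x i⟫-a)^2
        = (G a - G' a * a + c*a^2) + (G' a - 2*c*a) * ⟪y, x i⟫ + c * ⟪y, x i⟫^2 :=
      fun i => by ring
    rw [Finset.sum_congr rfl (fun i (_ : i ∈ (Finset.univ : Finset (Fin (d+1)))) => hexp i)]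
    rw [Finset.sum_add_distrib, Finset.sum_add_distrib, ← Finset.mul_sum, ← Finset.mul_sum]
    rw [hzero y, hframe y hy]
    simp only [Finset.sum_const, Finset.card_univ, Fintype.card_fin, nsmul_eq_mul,
      mul_zero, add_zero]
    rw [hc]
    simp only [hadef]
    field_simp
    push_cast
    ring
  have hA4 : f 4 = ((G (-1) : ℝ) : EReal) := by
    simp only [hGdef]
    rw [show (2 - 2*(-1:ℝ)) = 4 from by norm_num]
    exact (EReal.coe_toReal (hfin 4 ⟨by norm_num, le_refl _⟩)
      (hne_bot 4 ⟨by norm_num, by norm_num⟩)).symm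
  have hp0mem : (2 - 2/(d:ℝ)) ∈ Set.Ioc (0:ℝ) 4 := by
    constructor
    · have : 2/(d:ℝ) = 2*(1/(d:ℝ)) := by ring
      rw [this]
      linarith [hdinv]
    · have : (0:ℝ) < 2/(d:ℝ) := by positivity
      linarith
  have hBp : f (2 - 2/(d:ℝ)) = ((G a : ℝ) : EReal) := by
    simp only [hGdef]
    rw [show (2 - 2*a) = 2 - 2/(d:ℝ) from by rw [hadef]; ring]
    exact (EReal.coe_toReal (hfin _ hp0mem) (hne_bot _ ⟨hp0mem.1.le, hp0mem.2⟩)).symm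
  calc f 4 + ((d:ℝ) : EReal) * f (2 - 2/(d:ℝ))
      = ((G (-1) + (d:ℝ) * G a : ℝ) : EReal) := by
        rw [hA4, hBp, ← EReal.coe_mul, ← EReal.coe_add]
    _ = ((∑ i, (G a + G' a * (⟪y, x i⟫-a) + c * (⟪y, x i⟫-a)^2) : ℝ) : EReal) := by
        rw [hsumq]
    _ = ∑ i, ((G a + G' a * (⟪y, x i⟫-a) + c * (⟪y, x i⟫-a)^2 : ℝ) : EReal) :=
        ereal_coe_sum _ _
    _ ≤ ∑ i, f (2 - 2*⟪y, x i⟫) :=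
        Finset.sum_le_sum (fun i _ => hq_ereal _ (hu i))
    _ = ∑ i, f (‖y - x i‖^2) := by
        exact (Finset.sum_congr rfl (fun i _ => by rw [hdist i])).symm


theorem stmt_17 (d : ℕ) (hd : 2 ≤ d) (f : ℝ → EReal) (f' : ℝ → ℝ)
    (hne_bot : ∀ t ∈ Set.Icc (0:ℝ) 4, f t ≠ ⊥)
    (hfin : ∀ t ∈ Set.Ioc (0:ℝ) 4, f t ≠ ⊤)
    (hanti : AntitoneOn f (Set.Ioc (0:ℝ) 4))
    (hconv : ConvexOn ℝ (Set.Ioc (0:ℝ) 4) (fun t => (f t).toReal))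
    (hderiv : ∀ t ∈ Set.Ioo (0:ℝ) 4, HasDerivAt (fun s => (f s).toReal) (f' t) t)
    (hconc : ConcaveOn ℝ (Set.Ioo (0:ℝ) 4) f')
    (hlim : Filter.Tendsto f (nhdsWithin 0 (Set.Ioi 0)) (nhds (f 0))) :
    (∀ v : Fin (d+1) → EuclideanSpace ℝ (Fin d), (∀ i, ‖v i‖ = 1) →
      Function.Injective v →
      (⨅ y : Metric.sphere (0 : EuclideanSpace ℝ (Fin d)) 1,
          ∑ i, f (‖(y : EuclideanSpace ℝ (Fin d)) - v i‖^2)) ≤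
        f 4 + ((d:ℝ) : EReal) * f (2 - 2/(d:ℝ))) ∧
    (∀ x : Fin (d+1) → EuclideanSpace ℝ (Fin d), (∀ i, ‖x i‖ = 1) →
      (∀ i j, i ≠ j → (inner ℝ (x i) (x j) : ℝ) = -1/(d:ℝ)) →
      (⨅ y : Metric.sphere (0 : EuclideanSpace ℝ (Fin d)) 1,
          ∑ i, f (‖(y : EuclideanSpace ℝ (Fin d)) - x i‖^2)) =
        f 4 + ((d:ℝ) : EReal) * f (2 - 2/(d:ℝ))) := by
  have hupper : ∀ v : Fin (d+1) → EuclideanSpace ℝ (Fin d), (∀ i, ‖v i‖ = 1) →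
      Function.Injective v →
      (⨅ y : Metric.sphere (0 : EuclideanSpace ℝ (Fin d)) 1,
          ∑ i, f (‖(y : EuclideanSpace ℝ (Fin d)) - v i‖^2)) ≤
        f 4 + ((d:ℝ) : EReal) * f (2 - 2/(d:ℝ)) := by
    intro v hv hinj
    obtain ⟨xx, h1, h2, h3⟩ := geom d hd v hv hinj
    have hb := part1 d hd f hne_bot hfin hanti hconv v hv xx h1 h2 h3
    exact le_trans (iInf_le _ (⟨xx, by
      rw [mem_sphere_zero_iff_norm]; exact h1⟩ :
        Metric.sphere (0 : EuclideanSpace ℝ (Fin d)) 1)) hb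
  refine ⟨hupper, ?_⟩
  intro x hx1 hxin
  have hinj : Function.Injective x := by
    intro i j hij
    by_contra hne
    have h2 := hxin i j hne
    rw [hij, real_inner_self_eq_norm_sq, hx1 j] at h2
    have h3 : (0:ℝ) < 1/(d:ℝ) := by
      have : (0:ℝ) < d := by
        have : (2:ℝ) ≤ d := by exact_mod_cast hd
        linarith
      positivity
    have : (1:ℝ)^2 = 1 := one_pow 2
    rw [this] at h2
    have : -1/(d:ℝ) = -(1/(d:ℝ)) := by ring
    rw [this] at h2
    linarith
  apply le_antisymm
  · exact hupper x hx1 hinj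
  · apply le_iInf
    intro y
    have hy1 : ‖(y : EuclideanSpace ℝ (Fin d))‖ = 1 := by
      have h4 := y.2
      rwa [mem_sphere_zero_iff_norm] at h4
    exact part2_lb d hd f f' hne_bot hfin hanti hderiv hconc hlim x hx1 hxin
      (y : EuclideanSpace ℝ (Fin d)) hy1
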